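/- Let $2 \leq a < b \leq d-2$ be integers with $b \geq 2a - 1$. For $n \geq 0$ define $E_n = \bigcup_{i+j \leq n} [ia + jd, ib + jd] \subseteq \mathbb{Z}$ (union over nonnegative integers $i,j$). Then for $n \geq 1$, $E_{n+1} = E_n + \{0, d\}$ if and only if $nb + 1 \geq a + d$. -/
import Mathlib


open Pointwise

/-- Case B with `b ≥ 2a-1`: for `2 ≤ a < b ≤ d-2` and
`E n = ⋃_{i+j ≤ n} [ia+jd, ib+jd]`, one has `E (n+1) = E n + {0, d}` iff
`nb + 1 ≥ a + d`, for `n ≥ 1`. -/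
theorem caseB1_iff (a b d : ℤ) (ha : 2 ≤ a) (hab : a < b) (hbd : b ≤ d - 2)
    (hb : b ≥ 2 * a - 1)
    (E : ℕ → Set ℤ)
    (hE : ∀ n : ℕ, E n = ⋃ i : ℕ, ⋃ j : ℕ, ⋃ (_ : i + j ≤ n),
        Set.Icc ((i : ℤ) * a + (j : ℤ) * d) ((i : ℤ) * b + (j : ℤ) * d)) :
    ∀ n : ℕ, 1 ≤ n →
      (E (n + 1) = E n + ({0, d} : Set ℤ) ↔ (n : ℤ) * b + 1 ≥ a + d) := by
  have memE : ∀ (m : ℕ) (x : ℤ), x ∈ E m ↔ ∃ i j : ℕ, i + j ≤ m ∧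
      (i : ℤ) * a + (j : ℤ) * d ≤ x ∧ x ≤ (i : ℤ) * b + (j : ℤ) * d := by
    intro m x
    rw [hE m]
    simp only [Set.mem_iUnion, Set.mem_Icc]
    constructor
    · rintro ⟨i, j, hij, h1, h2⟩; exact ⟨i, j, hij, h1, h2⟩
    · rintro ⟨i, j, hij, h1, h2⟩; exact ⟨i, j, hij, h1, h2⟩
  have memS : ∀ (m : ℕ) (x : ℤ), x ∈ E m + ({0, d} : Set ℤ) ↔ x ∈ E m ∨ x - d ∈ E m := by
    intro m x
    rw [Set.mem_add]
    constructor
    · rintro ⟨u, hu, v, hv, rfl⟩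
      rcases hv with rfl | rfl
      · left; simpa using hu
      · right; simpa using hu
    · rintro (h | h)
      · exact ⟨x, h, 0, by simp, by ring⟩
      · exact ⟨x - d, h, d, by simp, by ring⟩
  have step : ∀ m : ℤ, 1 ≤ m → (m + 1) * a ≤ m * b + 1 := by
    intro m hm
    nlinarith [mul_le_mul_of_nonneg_left (show a - 1 ≤ b - a by linarith)
        (show (0:ℤ) ≤ m by linarith),
      mul_nonneg (show (0:ℤ) ≤ m - 1 by linarith) (show (0:ℤ) ≤ a - 1 by linarith)]
  have cover : ∀ (m : ℕ) (y : ℤ), a ≤ y → y ≤ (m : ℤ) * b →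
      ∃ i : ℕ, 1 ≤ i ∧ i ≤ m ∧ (i : ℤ) * a ≤ y ∧ y ≤ (i : ℤ) * b := by
    intro m
    induction m with
    | zero => intro y h1 h2; exfalso; push_cast at h2; linarith
    | succ m ih =>
      intro y h1 h2
      by_cases hy : y ≤ (m : ℤ) * b
      · obtain ⟨i, hi1, hi2, hi3, hi4⟩ := ih y h1 hy
        exact ⟨i, hi1, Nat.le_succ_of_le hi2, hi3, hi4⟩
      · refine ⟨m + 1, by omega, le_refl _, ?_, ?_⟩
        · push_cast
          rcases Nat.eq_zero_or_pos m with rfl | hm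
          · simpa using h1
          · have hm1 : (1:ℤ) ≤ (m : ℤ) := by exact_mod_cast hm
            have hy' : (m : ℤ) * b + 1 ≤ y := by
              have := lt_of_not_ge hy
              linarith [Int.add_one_le_iff.mpr this]
            linarith [step (m : ℤ) hm1]
        · push_cast; push_cast at h2; linarith
  intro n hn
  have hn1 : (1:ℤ) ≤ (n : ℤ) := by exact_mod_cast hn
  have hbpos : (0:ℤ) < b := by linarith
  constructor
  · -- equality → nb + 1 ≥ a + d
    intro heq
    by_contra hlt
    push_neg at hlt
    -- hlt : n*b + 1 < a + d
    set w : ℤ := if (n : ℤ) * b + 1 = d then (n : ℤ) * b + 2 else (n : ℤ) * b + 1 with hw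
    have hw_lb : (n : ℤ) * b + 1 ≤ w := by
      rw [hw]; split_ifs <;> linarith
    have hw_ub : w ≤ (n : ℤ) * b + 2 := by
      rw [hw]; split_ifs <;> linarith
    have hw_ne : w ≠ d := by
      rw [hw]; split_ifs with h
      · intro hc; rw [← h] at hc; linarith
      · exact h
    have hw_lt : w < a + d := by
      rw [hw]; split_ifs with h
      · linarith
      · exact hlt
    have hw_memE1 : w ∈ E (n + 1) := by
      rw [memE]
      refine ⟨n + 1, 0, by omega, ?_, ?_⟩
      · push_cast
        have := step (n : ℤ) hn1
        linarith
      · push_cast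
        linarith
    have hw_not : w ∉ E n + ({0, d} : Set ℤ) := by
      rw [memS]
      have ha0 : ∀ (i j : ℕ), 1 ≤ j →
          ¬((i : ℤ) * a + (j : ℤ) * d ≤ w ∧ w ≤ (i : ℤ) * b + (j : ℤ) * d) := by
        intro i j hj ⟨h1, h2⟩
        have hj1 : (1:ℤ) ≤ (j : ℤ) := by exact_mod_cast hj
        rcases Nat.eq_zero_or_pos i with rfl | hi
        ·
          simp only [Nat.cast_zero, zero_mul, zero_add] at h1 h2
          have hwjd : w = (j : ℤ) * d := le_antisymm h2 h1
          rcases eq_or_lt_of_le hj1 with hj2 | hj2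
          · exact hw_ne (by rw [hwjd, ← hj2, one_mul])
          · have : (2:ℤ) ≤ (j : ℤ) := by exact_mod_cast hj2
            have hd0 : (0:ℤ) < d := by linarith
            nlinarith
        · have hi1 : (1:ℤ) ≤ (i : ℤ) := by exact_mod_cast hi
          have hd0 : (0:ℤ) < d := by linarith
          nlinarith
      rintro (hmem | hmem) <;> rw [memE] at hmem <;>
        obtain ⟨i, j, hij, h1, h2⟩ := hmem
      · rcases Nat.eq_zero_or_pos j with rfl | hj
        · rcases Nat.eq_zero_or_pos i with rfl | hi
          · simp only [Nat.cast_zero, zero_mul, zero_add, add_zero] at h2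
            have : (0:ℤ) < (n : ℤ) * b := mul_pos (by linarith) hbpos
            linarith
          · have hi1 : (1:ℤ) ≤ (i : ℤ) := by exact_mod_cast hi
            have hin : (i : ℤ) ≤ (n : ℤ) := by exact_mod_cast (by omega : i ≤ n)
            have : (i : ℤ) * b ≤ (n : ℤ) * b :=
              mul_le_mul_of_nonneg_right hin (le_of_lt hbpos)
            simp only [Nat.cast_zero, zero_mul, add_zero] at h1 h2
            linarith
        · exact ha0 i j hj ⟨h1, h2⟩
      · -- w - d ∈ E n : then w ∈ [i*a + (j+1)*d, i*b + (j+1)*d]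
        refine ha0 i (j + 1) (by omega) ⟨?_, ?_⟩ <;> push_cast <;>
          push_cast at h1 h2 <;> linarith
    rw [heq] at hw_memE1
    exact hw_not hw_memE1
  · -- nb + 1 ≥ a + d → equality
    intro hge
    ext x
    rw [memS, memE, memE, memE]
    constructor
    · rintro ⟨i, j, hij, h1, h2⟩
      by_cases hle : i + j ≤ n
      · exact Or.inl ⟨i, j, hle, h1, h2⟩
      · have hij' : i + j = n + 1 := by omega
        rcases Nat.eq_zero_or_pos j with rfl | hj
        · -- i = n + 1, j = 0
          have hi : i = n + 1 := by omega
          subst hi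
          simp only [Nat.cast_zero, zero_mul, add_zero] at h1 h2
          by_cases hx : x ≤ (n : ℤ) * b
          · refine Or.inl ⟨n, 0, by omega, ?_, ?_⟩ <;>
              simp only [Nat.cast_zero, zero_mul, add_zero] <;> push_cast at h1 h2
            · nlinarith
            · exact hx
          · have hx' : (n : ℤ) * b + 1 ≤ x := Int.add_one_le_iff.mpr (lt_of_not_ge hx)
            obtain ⟨i', hi1, hi2, hi3, hi4⟩ := cover n (x - d)
              (by linarith) (by push_cast at h2; linarith)
            refine Or.inr ⟨i', 0, by omega, ?_, ?_⟩ <;>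
              simp only [Nat.cast_zero, zero_mul, add_zero] <;> linarith
        · obtain ⟨j', rfl⟩ : ∃ j', j = j' + 1 := ⟨j - 1, by omega⟩
          refine Or.inr ⟨i, j', by omega, ?_, ?_⟩ <;> push_cast <;>
            push_cast at h1 h2 <;> linarith
    · rintro (⟨i, j, hij, h1, h2⟩ | ⟨i, j, hij, h1, h2⟩)
      · exact ⟨i, j, by omega, h1, h2⟩
      · refine ⟨i, j + 1, by omega, ?_, ?_⟩ <;> push_cast <;> push_cast at h1 h2 <;> linarith
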